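/- Let T be a subtree of 2^{<ω} and for n ∈ ω let T↾n = T ∩ 2^n. Fix n* ∈ ω and ε = 2^{-n*}. Among all clopen sets of the form C = ⋃_{s∈F}[s] with F ⊆ 2^n, |F| = 2^{n-n*} (i.e., the sets C^{n*}_k supported on coordinates below n), the proportion of those disjoint from all branches through T↾n, relative to all such sets, is at most C(2^n − m, 2^{n-n*}) / C(2^n, 2^{n-n*}) where m = |T↾n|; consequently this ratio is at most a·e^{−ε·m} for some constant a ≥ 1 independent of n and m. -/

import Mathlib

open scoped Classical

private lemma choose_step (M k : ℕ) :
    (M.choose k : ℝ) = ((M + 1).choose k : ℝ) * (1 - (k : ℝ) / (M + 1)) := by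
  by_cases hk : k ≤ M + 1
  · have h := Nat.choose_mul_succ_eq M k
    have hM1 : ((M : ℝ) + 1) ≠ 0 := by positivity
    have hcast : ((M.choose k : ℕ) : ℝ) * ((M : ℝ) + 1)
        = ((M + 1).choose k : ℝ) * (((M : ℝ) + 1) - (k : ℝ)) := by
      have := congrArg (fun x : ℕ => (x : ℝ)) h
      push_cast [Nat.cast_sub hk] at this
      push_cast
      linarith [this]
    field_simp
    linarith [hcast]
  · push_neg at hk
    rw [Nat.choose_eq_zero_of_lt (by omega), Nat.choose_eq_zero_of_lt (by omega)]
    simp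

private lemma choose_prod (N k : ℕ) : ∀ m, m ≤ N →
    ((N - m).choose k : ℝ)
      = (N.choose k : ℝ) * ∏ i ∈ Finset.Icc (N - m + 1) N, (1 - (k : ℝ) / (i : ℝ)) := by
  intro m
  induction m with
  | zero => simp
  | succ m ih =>
    intro hm
    have hm' : m ≤ N := by omega
    set M := N - (m + 1) with hM
    have hNm : N - m = M + 1 := by omega
    have ih' := ih hm'
    rw [hNm] at ih'
    have hins : Finset.Icc (M + 1) N = insert (M + 1) (Finset.Icc (M + 1 + 1) N) := by
      ext x; simp only [Finset.mem_Icc, Finset.mem_insert]; omega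
    have hnotmem : (M + 1) ∉ Finset.Icc (M + 1 + 1) N := by
      simp only [Finset.mem_Icc]; omega
    rw [hins, Finset.prod_insert hnotmem, choose_step M k, ih']
    push_cast
    ring

private lemma choose_le (N k : ℕ) (hN : 0 < N) (hk : k ≤ N) : ∀ m, m ≤ N →
    ((N - m).choose k : ℝ) ≤ (N.choose k : ℝ) * (1 - (k : ℝ) / N) ^ m := by
  have hfac : (0 : ℝ) ≤ 1 - (k : ℝ) / N := by
    have : (k : ℝ) / N ≤ 1 := by
      rw [div_le_one (by positivity)]
      exact_mod_cast hk
    linarith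
  intro m
  induction m with
  | zero => simp
  | succ m ih =>
    intro hm
    have hm' : m ≤ N := by omega
    have ih' := ih hm'
    set M := N - (m + 1) with hM
    have hNm : N - m = M + 1 := by omega
    by_cases hkM : k ≤ M + 1
    · have hstep := choose_step M k
      have h1 : (1 - (k : ℝ) / (M + 1)) ≤ (1 - (k : ℝ) / N) := by
        have hMN : (M : ℝ) + 1 ≤ N := by
          have : M + 1 ≤ N := by omega
          exact_mod_cast this
        have : (k : ℝ) / N ≤ (k : ℝ) / (M + 1) :=
          div_le_div_of_nonneg_left (by positivity) (by positivity) hMN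
        linarith
      calc (M.choose k : ℝ) = ((M + 1).choose k : ℝ) * (1 - (k : ℝ) / (M + 1)) := hstep
        _ ≤ ((M + 1).choose k : ℝ) * (1 - (k : ℝ) / N) := by
            apply mul_le_mul_of_nonneg_left h1 (by positivity)
        _ = ((N - m).choose k : ℝ) * (1 - (k : ℝ) / N) := by rw [hNm]
        _ ≤ (N.choose k : ℝ) * (1 - (k : ℝ) / N) ^ m * (1 - (k : ℝ) / N) :=
            mul_le_mul_of_nonneg_right ih' hfac
        _ = (N.choose k : ℝ) * (1 - (k : ℝ) / N) ^ (m + 1) := by ring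
    · rw [Nat.choose_eq_zero_of_lt (by omega)]
      push_cast
      positivity

theorem clopen_avoiding_tree_estimate (nstar : ℕ) :
    ∃ a : ℝ, 1 ≤ a ∧ ∀ n m : ℕ, nstar ≤ n → m ≤ 2 ^ n →
      (∀ T : Finset (Fin n → Bool), T.card = m →
        (Finset.univ.filter fun F : Finset (Fin n → Bool) =>
            F.card = 2 ^ (n - nstar) ∧ Disjoint F T).card
          = Nat.choose (2 ^ n - m) (2 ^ (n - nstar))) ∧
      ((Nat.choose (2 ^ n - m) (2 ^ (n - nstar)) : ℝ) /
          (Nat.choose (2 ^ n) (2 ^ (n - nstar)) : ℝ)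
        = ∏ j ∈ Finset.Icc 1 m,
            (1 - (2 : ℝ) ^ (n - nstar) / ((2 : ℝ) ^ n - (m : ℝ) + (j : ℝ)))) ∧
      (Nat.choose (2 ^ n - m) (2 ^ (n - nstar)) : ℝ) /
          (Nat.choose (2 ^ n) (2 ^ (n - nstar)) : ℝ)
        ≤ a * Real.exp (-((2 : ℝ)⁻¹ ^ nstar) * (m : ℝ)) := by
  refine ⟨1, le_refl _, fun n m hn hm => ?_⟩
  set N := 2 ^ n with hN
  set k := 2 ^ (n - nstar) with hk
  have hkN : k ≤ N := Nat.pow_le_pow_right (by norm_num) (by omega)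
  have hchoosepos : (0 : ℝ) < (N.choose k : ℝ) := by
    exact_mod_cast Nat.choose_pos hkN
  have hcard : Fintype.card (Fin n → Bool) = N := by
    simp [Fintype.card_fun, hN]
  refine ⟨?_, ?_, ?_⟩
  · -- counting
    intro T hT
    have hset : (Finset.univ.filter fun F : Finset (Fin n → Bool) =>
        F.card = k ∧ Disjoint F T) = Finset.powersetCard k Tᶜ := by
      ext F
      simp only [Finset.mem_filter, Finset.mem_univ, true_and, Finset.mem_powersetCard]
      constructor
      · rintro ⟨h1, h2⟩
        exact ⟨le_compl_iff_disjoint_right.mpr h2, h1⟩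
      · rintro ⟨h1, h2⟩
        exact ⟨h2, le_compl_iff_disjoint_right.mp h1⟩
    rw [hset, Finset.card_powersetCard, Finset.card_compl, hcard, hT]
  · -- equality with the product
    rw [choose_prod N k m hm, mul_comm, mul_div_assoc, div_self (ne_of_gt hchoosepos),
      mul_one]
    have hmap : Finset.Icc (N - m + 1) N
        = (Finset.Icc 1 m).map (addLeftEmbedding (N - m)) := by
      rw [Finset.map_add_left_Icc]
      congr 1
      omega
    rw [hmap, Finset.prod_map]
    apply Finset.prod_congr rfl
    intro j hj
    simp only [addLeftEmbedding_apply]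
    have hj1 : ((N - m + j : ℕ) : ℝ) = (2 : ℝ) ^ n - (m : ℝ) + (j : ℝ) := by
      push_cast [Nat.cast_sub hm]
      rw [hN]
      push_cast
      ring
    have hk' : ((k : ℕ) : ℝ) = (2 : ℝ) ^ (n - nstar) := by
      rw [hk]; push_cast; ring
    rw [hj1, hk']
  · -- inequality
    have hNpos : 0 < N := Nat.pow_pos (by norm_num)
    have hb := choose_le N k hNpos hkN m hm
    have heps : (k : ℝ) / (N : ℝ) = (2 : ℝ)⁻¹ ^ nstar := by
      have hsplit : (N : ℝ) = (k : ℝ) * 2 ^ nstar := by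
        rw [hN, hk]
        push_cast
        rw [← pow_add]
        congr 1
        omega
      have hkpos : (0 : ℝ) < (k : ℝ) := by
        have : 0 < k := Nat.pow_pos (by norm_num)
        exact_mod_cast this
      rw [hsplit, inv_pow]
      field_simp
    rw [div_le_iff₀ hchoosepos, one_mul]
    calc ((N - m).choose k : ℝ) ≤ (N.choose k : ℝ) * (1 - (k : ℝ) / N) ^ m := hb
      _ ≤ (N.choose k : ℝ) * Real.exp (-((2 : ℝ)⁻¹ ^ nstar) * (m : ℝ)) := by
          apply mul_le_mul_of_nonneg_left _ (le_of_lt hchoosepos)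
          have h1 : (1 - (k : ℝ) / N) ≤ Real.exp (-((k : ℝ) / N)) := by
            have := Real.add_one_le_exp (-((k : ℝ) / N))
            linarith
          have h0 : (0 : ℝ) ≤ 1 - (k : ℝ) / N := by
            have : (k : ℝ) / N ≤ 1 := by
              rw [div_le_one (by positivity)]
              exact_mod_cast hkN
            linarith
          calc (1 - (k : ℝ) / N) ^ m ≤ Real.exp (-((k : ℝ) / N)) ^ m :=
                pow_le_pow_left₀ h0 h1 m
            _ = Real.exp (-((2 : ℝ)⁻¹ ^ nstar) * (m : ℝ)) := by
                rw [← Real.exp_nat_mul, heps]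
                ring_nf
      _ = Real.exp (-((2 : ℝ)⁻¹ ^ nstar) * (m : ℝ)) * (N.choose k : ℝ) := by ring
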